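/- For every q > 0 one has H̃(q) ≥ √2 − 1, and H̃(q) = √2 − 1 if and only if q = 1/√2; that is, the minimum of H̃ over (0, +∞) is √2 − 1, attained exactly at q = 1/√2. -/

import Mathlib

open Filter Set

/-- `w` is the root of `q (z^3 - z) + 1 = 0` with `Im w ≥ 0`, `Re w > 0` having the
smallest real part among all such roots. -/
def IsQtilde (q : ℝ) (w : ℂ) : Prop :=
  (q : ℂ) * (w ^ 3 - w) + 1 = 0 ∧ 0 ≤ w.im ∧ 0 < w.re ∧
    ∀ z : ℂ, (q : ℂ) * (z ^ 3 - z) + 1 = 0 → 0 ≤ z.im → 0 < z.re → w.re ≤ z.re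

/-- `H̃(q) = |(q̃ - 1)/(q̃ + 1)| · exp(q · Re(q̃²))` where `q̃` is the distinguished root. -/
noncomputable def Htilde (q : ℝ) : ℝ :=
  ‖(Classical.epsilon (IsQtilde q) - 1) / (Classical.epsilon (IsQtilde q) + 1)‖ *
    Real.exp (q * ((Classical.epsilon (IsQtilde q)) ^ 2).re)

/-- The minimum of H̃ over (0, ∞) is √2 - 1, attained exactly at q = 1/√2. -/
lemma htilde_nonneg (q : ℝ) : 0 ≤ Htilde q :=
  mul_nonneg (norm_nonneg _) (Real.exp_pos _).le

lemma isQtilde_unique {q : ℝ} (hq : 0 < q) {w w' : ℂ}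
    (hw : IsQtilde q w) (hw' : IsQtilde q w') : w = w' := by
  obtain ⟨he, him, hre, hmin⟩ := hw
  obtain ⟨he', him', hre', hmin'⟩ := hw'
  have hRe : w.re = w'.re := le_antisymm (hmin w' he' him' hre') (hmin' w he him hre)
  have hq0 : (q : ℂ) ≠ 0 := by exact_mod_cast hq.ne'
  have hcube : w ^ 3 - w = w' ^ 3 - w' := by
    apply mul_left_cancel₀ hq0
    linear_combination he - he'
  have hfac : (w - w') * (w ^ 2 + w * w' + w' ^ 2 - 1) = 0 := by
    linear_combination hcube
  rcases mul_eq_zero.mp hfac with h | h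
  · exact sub_eq_zero.mp h
  · have h2 : w * w + w * w' + w' * w' - 1 = 0 := by linear_combination h
    have him2 := congrArg Complex.im h2
    simp only [Complex.add_im, Complex.sub_im, Complex.mul_im, Complex.one_im,
      Complex.zero_im] at him2
    rw [hRe] at him2
    have hB : w.im = 0 := by nlinarith [hre', him, him']
    have hC : w'.im = 0 := by nlinarith [hre', him, him']
    exact Complex.ext hRe (by rw [hB, hC])

lemma epsilon_eq {q : ℝ} (hq : 0 < q) {w : ℂ} (hw : IsQtilde q w) :
    Classical.epsilon (IsQtilde q) = w :=
  isQtilde_unique hq (Classical.epsilon_spec (⟨w, hw⟩ : ∃ x, IsQtilde q x)) hw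

lemma isQtilde_A {q a b : ℝ} (hq : 0 < q) (ha : 1 ≤ Real.sqrt 3 * a)
    (hb2 : b ^ 2 = 3 * a ^ 2 - 1) (hb0 : 0 ≤ b) (hroot : q * (8 * a ^ 3 - 2 * a) = 1) :
    IsQtilde q ((a : ℂ) + (b : ℂ) * Complex.I) := by
  have hr3 : Real.sqrt 3 ^ 2 = 3 := Real.sq_sqrt (by norm_num)
  have hr30 : 0 ≤ Real.sqrt 3 := Real.sqrt_nonneg 3
  have h3lt : Real.sqrt 3 < 2 := by nlinarith
  have ha0 : 0 < a := by nlinarith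
  have ha1 : 1 / 2 < a := by nlinarith
  have hbC : (b : ℂ) ^ 2 = 3 * (a : ℂ) ^ 2 - 1 := by
    have := congrArg (fun x : ℝ => (x : ℂ)) hb2
    push_cast at this
    exact this
  have hrootC : (q : ℂ) * (8 * (a : ℂ) ^ 3 - 2 * (a : ℂ)) = 1 := by
    have := congrArg (fun x : ℝ => (x : ℂ)) hroot
    push_cast at this
    exact this
  have heq : (q : ℂ) * (((a : ℂ) + (b : ℂ) * Complex.I) ^ 3 - ((a : ℂ) + (b : ℂ) * Complex.I)) + 1 = 0 := by
    linear_combination (q : ℂ) * (-3 * (a : ℂ) - (b : ℂ) * Complex.I) * hbC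
      + (q : ℂ) * (3 * (a : ℂ) * (b : ℂ) ^ 2 + (b : ℂ) ^ 3 * Complex.I) * Complex.I_sq - hrootC
  refine ⟨heq, by simp [hb0], by simp [ha0], ?_⟩
  intro z hz hzim hzre
  have hq0 : (q : ℂ) ≠ 0 := by exact_mod_cast hq.ne'
  have hzw : z ^ 3 - z = ((a : ℂ) + (b : ℂ) * Complex.I) ^ 3 - ((a : ℂ) + (b : ℂ) * Complex.I) := by
    apply mul_left_cancel₀ hq0
    linear_combination hz - heq
  have hfac : (z - ((a : ℂ) + (b : ℂ) * Complex.I)) *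
      ((z - ((a : ℂ) - (b : ℂ) * Complex.I)) * (z + 2 * (a : ℂ))) = 0 := by
    linear_combination hzw + (z - ((a : ℂ) + (b : ℂ) * Complex.I)) * hbC
      - (z - ((a : ℂ) + (b : ℂ) * Complex.I)) * (b : ℂ) ^ 2 * Complex.I_sq
  have hwre : ((a : ℂ) + (b : ℂ) * Complex.I).re = a := by simp
  rw [hwre]
  rcases mul_eq_zero.mp hfac with h | h
  · have hz' : z = (a : ℂ) + (b : ℂ) * Complex.I := sub_eq_zero.mp h
    rw [hz']; simp
  · rcases mul_eq_zero.mp h with h' | h'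
    · have hz' : z = (a : ℂ) - (b : ℂ) * Complex.I := sub_eq_zero.mp h'
      rw [hz']; simp
    · exfalso
      have hz' : z = -(2 * (a : ℂ)) := by linear_combination h'
      have : z.re = -(2 * a) := by rw [hz']; simp
      rw [this] at hzre
      linarith

lemma htilde_A {q a b : ℝ} (hq : 0 < q) (ha : 1 ≤ Real.sqrt 3 * a)
    (hb2 : b ^ 2 = 3 * a ^ 2 - 1) (hb0 : 0 ≤ b) (hroot : q * (8 * a ^ 3 - 2 * a) = 1) :
    (Htilde q) ^ 2 = (2 * a - 1) / (2 * a + 1) * Real.exp (2 * q * (1 - 2 * a ^ 2)) := by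
  have hr3 : Real.sqrt 3 ^ 2 = 3 := Real.sq_sqrt (by norm_num)
  have hr30 : 0 ≤ Real.sqrt 3 := Real.sqrt_nonneg 3
  have h3lt : Real.sqrt 3 < 2 := by nlinarith
  have ha1 : 1 / 2 < a := by nlinarith
  have heps := epsilon_eq hq (isQtilde_A hq ha hb2 hb0 hroot)
  unfold Htilde
  rw [heps]
  have hre2 : ((((a : ℂ) + (b : ℂ) * Complex.I)) ^ 2).re = 1 - 2 * a ^ 2 := by
    have h1 : ((((a : ℂ) + (b : ℂ) * Complex.I)) ^ 2).re = a * a - b * b := by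
      simp [pow_two, Complex.mul_re]
    rw [h1]; linear_combination -hb2
  rw [hre2]
  have habs : (‖((a : ℂ) + (b : ℂ) * Complex.I - 1) / ((a : ℂ) + (b : ℂ) * Complex.I + 1)‖) ^ 2
      = (2 * a - 1) / (2 * a + 1) := by
    rw [Complex.sq_norm, map_div₀]
    have h1 : Complex.normSq ((a : ℂ) + (b : ℂ) * Complex.I - 1) = (a - 1) * (a - 1) + b * b := by
      simp [Complex.normSq_apply]
    have h2 : Complex.normSq ((a : ℂ) + (b : ℂ) * Complex.I + 1) = (a + 1) * (a + 1) + b * b := by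
      simp [Complex.normSq_apply]
    rw [h1, h2, div_eq_div_iff (by nlinarith) (by nlinarith)]
    linear_combination 2 * hb2
  rw [mul_pow, habs]
  congr 1
  rw [pow_two, ← Real.exp_add]
  ring_nf

lemma isQtilde_B {q s : ℝ} (hq : 0 < q) (hs0 : 0 < s) (hs1 : Real.sqrt 3 * s ≤ 1)
    (hroot : q * (s - s ^ 3) = 1) : IsQtilde q ((s : ℂ)) := by
  have hr3 : Real.sqrt 3 ^ 2 = 3 := Real.sq_sqrt (by norm_num)
  have hr30 : 0 ≤ Real.sqrt 3 := Real.sqrt_nonneg 3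
  have hs3 : 3 * s ^ 2 ≤ 1 := by
    have h := mul_nonneg (by nlinarith : (0:ℝ) ≤ 1 - Real.sqrt 3 * s)
      (by nlinarith : (0:ℝ) ≤ 1 + Real.sqrt 3 * s)
    nlinarith [h]
  have hrootC : (q : ℂ) * ((s : ℂ) - (s : ℂ) ^ 3) = 1 := by
    have := congrArg (fun x : ℝ => (x : ℂ)) hroot
    push_cast at this
    exact this
  have heq : (q : ℂ) * ((s : ℂ) ^ 3 - (s : ℂ)) + 1 = 0 := by linear_combination -hrootC
  refine ⟨heq, by simp, by simp [hs0], ?_⟩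
  intro z hz hzim hzre
  have hq0 : (q : ℂ) ≠ 0 := by exact_mod_cast hq.ne'
  have hzw : z ^ 3 - z = (s : ℂ) ^ 3 - (s : ℂ) := by
    apply mul_left_cancel₀ hq0
    linear_combination hz - heq
  have hfac : (z - (s : ℂ)) * (z * z + (s : ℂ) * z + (s : ℂ) * (s : ℂ) - 1) = 0 := by
    linear_combination hzw
  simp only [Complex.ofReal_re]
  rcases mul_eq_zero.mp hfac with h | h
  · have : z = (s : ℂ) := sub_eq_zero.mp h
    rw [this]; simp
  · have him2 := congrArg Complex.im h
    simp only [Complex.add_im, Complex.sub_im, Complex.mul_im, Complex.one_im, Complex.zero_im,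
      Complex.ofReal_im, Complex.ofReal_re] at him2
    have him0 : (2 * z.re + s) * z.im = 0 := by linear_combination him2
    have hzim0 : z.im = 0 := by
      rcases mul_eq_zero.mp him0 with h' | h'
      · nlinarith
      · exact h'
    have hre2 := congrArg Complex.re h
    simp only [Complex.add_re, Complex.sub_re, Complex.mul_re, Complex.one_re, Complex.zero_re,
      Complex.ofReal_im, Complex.ofReal_re, hzim0] at hre2
    by_contra hlt
    push_neg at hlt
    nlinarith [hre2, hzre, hs3, hlt]

lemma htilde_B {q s : ℝ} (hq : 0 < q) (hs0 : 0 < s) (hs1 : Real.sqrt 3 * s ≤ 1)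
    (hroot : q * (s - s ^ 3) = 1) :
    Htilde q = (1 - s) / (1 + s) * Real.exp (q * s ^ 2) := by
  have hr3 : Real.sqrt 3 ^ 2 = 3 := Real.sq_sqrt (by norm_num)
  have hr30 : 0 ≤ Real.sqrt 3 := Real.sqrt_nonneg 3
  have hs3 : 3 * s ^ 2 ≤ 1 := by
    have h := mul_nonneg (by nlinarith : (0:ℝ) ≤ 1 - Real.sqrt 3 * s)
      (by nlinarith : (0:ℝ) ≤ 1 + Real.sqrt 3 * s)
    nlinarith [h]
  have hslt : s < 1 := by nlinarith
  have heps := epsilon_eq hq (isQtilde_B hq hs0 hs1 hroot)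
  unfold Htilde
  rw [heps]
  have h1 : ((s : ℂ) - 1) / ((s : ℂ) + 1) = (((s - 1) / (s + 1) : ℝ) : ℂ) := by push_cast; ring
  have h2 : (((s : ℂ)) ^ 2).re = s ^ 2 := by
    rw [← Complex.ofReal_pow, Complex.ofReal_re]
  rw [h1, h2, Complex.norm_real, Real.norm_eq_abs, abs_div, abs_of_neg (by linarith : s - 1 < 0),
    abs_of_pos (by linarith : (0:ℝ) < s + 1)]
  ring_nf

lemma caseB_ineq {q s : ℝ} (hq : 0 < q) (hs0 : 0 < s) (hs1 : Real.sqrt 3 * s ≤ 1)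
    (hroot : q * (s - s ^ 3) = 1) :
    Real.sqrt 2 - 1 < (1 - s) / (1 + s) * Real.exp (q * s ^ 2) := by
  have hr : Real.sqrt 2 ^ 2 = 2 := Real.sq_sqrt (by norm_num)
  have hr0 : 0 ≤ Real.sqrt 2 := Real.sqrt_nonneg 2
  have hrlt : Real.sqrt 2 < 1.42 := by nlinarith
  have hr3 : Real.sqrt 3 ^ 2 = 3 := Real.sq_sqrt (by norm_num)
  have hr30 : 0 ≤ Real.sqrt 3 := Real.sqrt_nonneg 3
  have hs3 : 3 * s ^ 2 ≤ 1 := by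
    have h := mul_nonneg (by nlinarith : (0:ℝ) ≤ 1 - Real.sqrt 3 * s)
      (by nlinarith : (0:ℝ) ≤ 1 + Real.sqrt 3 * s)
    nlinarith [h]
  have hslt : s < 1 := by nlinarith
  have hv : (q * s ^ 2) * (s - s ^ 3) = s ^ 2 := by linear_combination s ^ 2 * hroot
  have hexp : 1 + q * s ^ 2 ≤ Real.exp (q * s ^ 2) := by
    linarith [Real.add_one_le_exp (q * s ^ 2)]
  have hfrac : 0 < (1 - s) / (1 + s) := div_pos (by linarith) (by linarith)
  have hD : 0 < s - s ^ 3 := by nlinarith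
  -- key polynomial fact: (2-r) + (3-2r)s - r s^2 > 0
  have h32 : (0:ℝ) < 3 - 2 * Real.sqrt 2 := by linarith
  have hkey : 0 < (2 - Real.sqrt 2) + (3 - 2 * Real.sqrt 2) * s - Real.sqrt 2 * s ^ 2 := by
    have h1 := mul_pos hs0 h32
    have h2 := mul_le_mul_of_nonneg_left hs3 hr0
    nlinarith [h1, h2]
  have hE : ((1 - s) * (1 + q * s ^ 2) - (Real.sqrt 2 - 1) * (1 + s)) * (s - s ^ 3)
      = ((2 - Real.sqrt 2) + (3 - 2 * Real.sqrt 2) * s - Real.sqrt 2 * s ^ 2) * (s * (1 - s)) := by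
    linear_combination (1 - s) * hv
  have hmid : (Real.sqrt 2 - 1) * (1 + s) < (1 - s) * (1 + q * s ^ 2) := by
    nlinarith [hE, hD, mul_pos hkey (mul_pos hs0 (by linarith : (0:ℝ) < 1 - s))]
  calc Real.sqrt 2 - 1 < (1 - s) * (1 + q * s ^ 2) / (1 + s) := by
        rw [lt_div_iff₀ (by linarith : (0:ℝ) < 1 + s)]; linarith [hmid]
    _ = (1 - s) / (1 + s) * (1 + q * s ^ 2) := by ring
    _ ≤ (1 - s) / (1 + s) * Real.exp (q * s ^ 2) :=
        mul_le_mul_of_nonneg_left hexp hfrac.le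

set_option maxHeartbeats 1600000 in
lemma caseA_key (t u : ℝ) (ht : 2 ≤ Real.sqrt 3 * t) (hu : u * (t ^ 3 - t) = 2 - t ^ 2) :
    (Real.sqrt 2 - 1) ^ 2 ≤ (t - 1) / (t + 1) * Real.exp u ∧
      (t ≠ Real.sqrt 2 → (Real.sqrt 2 - 1) ^ 2 < (t - 1) / (t + 1) * Real.exp u) := by
  have hr : Real.sqrt 2 ^ 2 = 2 := Real.sq_sqrt (by norm_num)
  have hr3 : Real.sqrt 3 ^ 2 = 3 := Real.sq_sqrt (by norm_num)
  have hr0 : 0 ≤ Real.sqrt 2 := Real.sqrt_nonneg 2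
  have hr30 : 0 ≤ Real.sqrt 3 := Real.sqrt_nonneg 3
  have h3lt : Real.sqrt 3 < 2 := by nlinarith
  have hrlt : Real.sqrt 2 < 3 / 2 := by nlinarith
  have hrgt : 1 < Real.sqrt 2 := by nlinarith
  have ht0 : 0 < t := by nlinarith
  have ht1 : 1 < t := by nlinarith
  have hD : 0 < t ^ 3 - t := by nlinarith
  have htp : (0:ℝ) < t + 1 := by linarith
  have hsq : (Real.sqrt 2 - 1) ^ 2 = 3 - 2 * Real.sqrt 2 := by linear_combination hr
  rcases le_or_gt t (Real.sqrt 2) with hle | hgt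
  · -- t ≤ √2, u ≥ 0
    have hN : 0 ≤ 2 - t ^ 2 := by nlinarith
    have hu0 : 0 ≤ u := by
      rcases le_or_gt 0 u with h | h
      · exact h
      · nlinarith
    have hexp : 1 + u + u ^ 2 / 2 ≤ Real.exp u := Real.quadratic_le_exp_of_nonneg hu0
    have hS : 0 < (4 * Real.sqrt 2 - 4) * t ^ 4 + 2 * t ^ 3 + (5 - 4 * Real.sqrt 2) * t ^ 2
        + (2 * Real.sqrt 2 - 2) * t + 2 := by
      nlinarith [mul_nonneg (mul_nonneg (by nlinarith : (0:ℝ) ≤ 4 * Real.sqrt 2 - 4)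
        (by nlinarith : (0:ℝ) ≤ t ^ 2 - 1)) (sq_nonneg t), sq_nonneg t, mul_pos ht0 ht0,
        mul_pos (mul_pos ht0 ht0) ht0]
    have hA : (t - 1) * (1 + u + u ^ 2 / 2) * (2 * (t ^ 3 - t) ^ 2)
        = (t - 1) * (2 * (t ^ 3 - t) ^ 2 + 2 * (2 - t ^ 2) * (t ^ 3 - t) + (2 - t ^ 2) ^ 2) := by
      linear_combination ((t - 1) * (2 * (t ^ 3 - t) + u * (t ^ 3 - t) + (2 - t ^ 2))) * hu
    have hB : (t - 1) * (2 * (t ^ 3 - t) ^ 2 + 2 * (2 - t ^ 2) * (t ^ 3 - t) + (2 - t ^ 2) ^ 2)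
          - (3 - 2 * Real.sqrt 2) * (t + 1) * (2 * (t ^ 3 - t) ^ 2)
        = (t - Real.sqrt 2) ^ 2 * ((t - 1) * ((4 * Real.sqrt 2 - 4) * t ^ 4 + 2 * t ^ 3
            + (5 - 4 * Real.sqrt 2) * t ^ 2 + (2 * Real.sqrt 2 - 2) * t + 2)) := by
      linear_combination (8 * t ^ 6 - 4 * t ^ 5 - 14 * t ^ 4 + 9 * t ^ 3 + 3 * t ^ 2 - 4 * t + 2
        + Real.sqrt 2 * (-4 * t ^ 5 + 4 * t ^ 4 + 4 * t ^ 3 - 6 * t ^ 2 + 2 * t)) * hr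
    have h2D : (0:ℝ) < 2 * (t ^ 3 - t) ^ 2 := by positivity
    have hEnn : 0 ≤ (t - Real.sqrt 2) ^ 2 * ((t - 1) * ((4 * Real.sqrt 2 - 4) * t ^ 4 + 2 * t ^ 3
        + (5 - 4 * Real.sqrt 2) * t ^ 2 + (2 * Real.sqrt 2 - 2) * t + 2)) :=
      mul_nonneg (sq_nonneg _) (mul_nonneg (by linarith) hS.le)
    have hexpfac : 0 ≤ (t - 1) * (Real.exp u - (1 + u + u ^ 2 / 2)) :=
      mul_nonneg (by linarith) (by linarith)
    constructor
    · rw [hsq, div_mul_eq_mul_div, le_div_iff₀ htp]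
      have hkey2 : (3 - 2 * Real.sqrt 2) * (t + 1) * (2 * (t ^ 3 - t) ^ 2)
          ≤ (t - 1) * (1 + u + u ^ 2 / 2) * (2 * (t ^ 3 - t) ^ 2) := by
        rw [hA]; linarith [hB]
      have hpoly := le_of_mul_le_mul_right hkey2 h2D
      nlinarith [hpoly, hexpfac]
    · intro hne
      have hEpos : 0 < (t - Real.sqrt 2) ^ 2 * ((t - 1) * ((4 * Real.sqrt 2 - 4) * t ^ 4 + 2 * t ^ 3
          + (5 - 4 * Real.sqrt 2) * t ^ 2 + (2 * Real.sqrt 2 - 2) * t + 2)) :=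
        mul_pos (pow_two_pos_of_ne_zero (sub_ne_zero.mpr hne))
          (mul_pos (by linarith) hS)
      rw [hsq, div_mul_eq_mul_div, lt_div_iff₀ htp]
      have hkey2 : (3 - 2 * Real.sqrt 2) * (t + 1) * (2 * (t ^ 3 - t) ^ 2)
          < (t - 1) * (1 + u + u ^ 2 / 2) * (2 * (t ^ 3 - t) ^ 2) := by
        rw [hA]; linarith [hB]
      have hpoly := lt_of_mul_lt_mul_right hkey2 h2D.le
      nlinarith [hpoly, hexpfac]
  · -- √2 < t, u ≤ 0
    have hexp : u + 1 ≤ Real.exp u := Real.add_one_le_exp u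
    have hA : (t - 1) * (1 + u) * (t ^ 3 - t) = (t - 1) * ((t ^ 3 - t) + (2 - t ^ 2)) := by
      linear_combination (t - 1) * hu
    have hB : (t - 1) * ((t ^ 3 - t) + (2 - t ^ 2)) - (3 - 2 * Real.sqrt 2) * (t + 1) * (t ^ 3 - t)
        = (t - Real.sqrt 2) ^ 2 * ((t - 1) * ((2 * Real.sqrt 2 - 2) * t + 1)) := by
      linear_combination (4 * t ^ 3 - 2 * t ^ 2 - 3 * t + 1
        + Real.sqrt 2 * (2 * t - 2 * t ^ 2)) * hr
    have hEpos : 0 < (t - Real.sqrt 2) ^ 2 * ((t - 1) * ((2 * Real.sqrt 2 - 2) * t + 1)) :=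
      mul_pos (pow_two_pos_of_ne_zero (sub_ne_zero.mpr (by linarith)))
        (mul_pos (by linarith) (by nlinarith))
    have hexpfac : 0 ≤ (t - 1) * (Real.exp u - (1 + u)) :=
      mul_nonneg (by linarith) (by linarith)
    have hkey2 : (3 - 2 * Real.sqrt 2) * (t + 1) * (t ^ 3 - t)
        < (t - 1) * (1 + u) * (t ^ 3 - t) := by
      rw [hA]; linarith [hB]
    have hpoly := lt_of_mul_lt_mul_right hkey2 hD.le
    have hmain : (Real.sqrt 2 - 1) ^ 2 < (t - 1) / (t + 1) * Real.exp u := by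
      rw [hsq, div_mul_eq_mul_div, lt_div_iff₀ htp]
      nlinarith [hpoly, hexpfac]
    exact ⟨hmain.le, fun _ => hmain⟩

set_option maxHeartbeats 1600000 in
lemma caseA_main {q : ℝ} (hq : 0 < q) (hA9 : 2 * Real.sqrt 3 * q ≤ 9) :
    (Real.sqrt 2 - 1 ≤ Htilde q) ∧ (Htilde q = Real.sqrt 2 - 1 ↔ q = 1 / Real.sqrt 2) := by
  have hr : Real.sqrt 2 ^ 2 = 2 := Real.sq_sqrt (by norm_num)
  have hr3 : Real.sqrt 3 ^ 2 = 3 := Real.sq_sqrt (by norm_num)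
  have hr0 : 0 ≤ Real.sqrt 2 := Real.sqrt_nonneg 2
  have hr30 : 0 ≤ Real.sqrt 3 := Real.sqrt_nonneg 3
  have h3lt : Real.sqrt 3 < 2 := by nlinarith
  have h3gt : 1 < Real.sqrt 3 := by nlinarith
  have hrgt : 1 < Real.sqrt 2 := by nlinarith
  -- IVT to find t
  have hlo2 : (2 * Real.sqrt 3 / 3) ^ 2 = 4 / 3 := by
    rw [div_pow, mul_pow, hr3]; norm_num
  have hlo0 : 0 < 2 * Real.sqrt 3 / 3 := by positivity
  have hq3 : 0 < 3 / q := by positivity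
  have hlohi : 2 * Real.sqrt 3 / 3 ≤ 2 * Real.sqrt 3 / 3 + 3 / q := by linarith
  have hcont : ContinuousOn (fun x : ℝ => x ^ 3 - x)
      (Icc (2 * Real.sqrt 3 / 3) (2 * Real.sqrt 3 / 3 + 3 / q)) :=
    (continuous_pow 3).sub continuous_id |>.continuousOn
  have hmem : 1 / q ∈ Icc ((fun x : ℝ => x ^ 3 - x) (2 * Real.sqrt 3 / 3))
      ((fun x : ℝ => x ^ 3 - x) (2 * Real.sqrt 3 / 3 + 3 / q)) := by
    constructor
    · show (2 * Real.sqrt 3 / 3) ^ 3 - 2 * Real.sqrt 3 / 3 ≤ 1 / q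
      have h1 : (2 * Real.sqrt 3 / 3) ^ 3 - 2 * Real.sqrt 3 / 3
          = 2 * Real.sqrt 3 / 9 := by
        have : (2 * Real.sqrt 3 / 3) ^ 3 = (2 * Real.sqrt 3 / 3) ^ 2 * (2 * Real.sqrt 3 / 3) := by ring
        rw [this, hlo2]; ring
      rw [h1, div_le_div_iff₀ (by norm_num) hq]
      linarith
    · show 1 / q ≤ (2 * Real.sqrt 3 / 3 + 3 / q) ^ 3 - (2 * Real.sqrt 3 / 3 + 3 / q)
      have hhi2 : 4 / 3 ≤ (2 * Real.sqrt 3 / 3 + 3 / q) ^ 2 := by nlinarith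
      have h2 : (3 / q) * (1 / 3) ≤ (2 * Real.sqrt 3 / 3 + 3 / q) *
          ((2 * Real.sqrt 3 / 3 + 3 / q) ^ 2 - 1) :=
        mul_le_mul (by linarith) (by linarith) (by norm_num) (by linarith)
      have h3 : (3 / q) * (1 / 3) = 1 / q := by ring
      nlinarith [h2]
  obtain ⟨t, htmem, hft⟩ := intermediate_value_Icc hlohi hcont hmem
  simp only at hft
  have htlo : 2 * Real.sqrt 3 / 3 ≤ t := htmem.1
  have hroott : q * (t ^ 3 - t) = 1 := by
    rw [hft]; field_simp
  -- set up a, b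
  have ha : 1 ≤ Real.sqrt 3 * (t / 2) := by nlinarith
  have h3a : 0 ≤ 3 * (t / 2) ^ 2 - 1 := by nlinarith
  have hb2 : (Real.sqrt (3 * (t / 2) ^ 2 - 1)) ^ 2 = 3 * (t / 2) ^ 2 - 1 := Real.sq_sqrt h3a
  have hb0 : 0 ≤ Real.sqrt (3 * (t / 2) ^ 2 - 1) := Real.sqrt_nonneg _
  have hroot : q * (8 * (t / 2) ^ 3 - 2 * (t / 2)) = 1 := by linear_combination hroott
  have hH2 := htilde_A hq ha hb2 hb0 hroot
  have hu : (2 * q * (1 - 2 * (t / 2) ^ 2)) * ((2 * (t / 2)) ^ 3 - 2 * (t / 2))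
      = 2 - (2 * (t / 2)) ^ 2 := by
    linear_combination (2 - 4 * (t / 2) ^ 2) * hroot
  have hkey := caseA_key (2 * (t / 2)) (2 * q * (1 - 2 * (t / 2) ^ 2))
    (by nlinarith) hu
  have h0 : 0 ≤ Htilde q := htilde_nonneg q
  have hle : Real.sqrt 2 - 1 ≤ Htilde q := by
    have h1 : (Real.sqrt 2 - 1) ^ 2 ≤ (Htilde q) ^ 2 := by
      rw [hH2]; exact hkey.1
    have h2 := Real.sqrt_le_sqrt h1
    rwa [Real.sqrt_sq (by linarith), Real.sqrt_sq h0] at h2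
  refine ⟨hle, ?_, ?_⟩
  · intro heq
    have h2a : 2 * (t / 2) = Real.sqrt 2 := by
      by_contra hne
      have hst := hkey.2 hne
      rw [← hH2, heq] at hst
      exact absurd hst (lt_irrefl _)
    have h8 : 8 * (t / 2) ^ 3 - 2 * (t / 2) = Real.sqrt 2 := by
      linear_combination (4 * (t / 2) ^ 2 + 2 * (t / 2) * Real.sqrt 2 + Real.sqrt 2 ^ 2 - 1) * h2a
        + Real.sqrt 2 * hr
    have hq2 : q * Real.sqrt 2 = 1 := by linear_combination hroot - q * h8
    rw [eq_div_iff (by positivity : Real.sqrt 2 ≠ 0)]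
    exact hq2
  · intro hq2
    have hq' : q * Real.sqrt 2 = 1 := by
      rw [hq2]; field_simp
    have h8 : 8 * (t / 2) ^ 3 - 2 * (t / 2) = Real.sqrt 2 :=
      mul_left_cancel₀ hq.ne' (hroot.trans hq'.symm)
    have h8' : 8 * (Real.sqrt 2 / 2) ^ 3 - 2 * (Real.sqrt 2 / 2) = Real.sqrt 2 := by
      linear_combination Real.sqrt 2 * hr
    have ha2 : t / 2 = Real.sqrt 2 / 2 := by
      have hfac : (t / 2 - Real.sqrt 2 / 2) *
          (8 * ((t / 2) ^ 2 + (t / 2) * (Real.sqrt 2 / 2) + (Real.sqrt 2 / 2) ^ 2) - 2) = 0 := by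
        linear_combination h8 - h8'
      rcases mul_eq_zero.mp hfac with h | h
      · linarith [sub_eq_zero.mp h]
      · exfalso; nlinarith [ha, h]
    have hH2' : (Htilde q) ^ 2 = (Real.sqrt 2 - 1) ^ 2 := by
      rw [hH2, ha2]
      have e1 : 2 * q * (1 - 2 * (Real.sqrt 2 / 2) ^ 2) = 0 := by
        have : 1 - 2 * (Real.sqrt 2 / 2) ^ 2 = 0 := by linear_combination -(1 / 2) * hr
        rw [this]; ring
      rw [e1, Real.exp_zero, mul_one]
      have e2 : 2 * (Real.sqrt 2 / 2) - 1 = Real.sqrt 2 - 1 := by ring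
      have e3 : 2 * (Real.sqrt 2 / 2) + 1 = Real.sqrt 2 + 1 := by ring
      rw [e2, e3, div_eq_iff (by positivity : Real.sqrt 2 + 1 ≠ 0)]
      linear_combination (1 - Real.sqrt 2) * hr
    calc Htilde q = Real.sqrt ((Htilde q) ^ 2) := (Real.sqrt_sq h0).symm
      _ = Real.sqrt ((Real.sqrt 2 - 1) ^ 2) := by rw [hH2']
      _ = Real.sqrt 2 - 1 := Real.sqrt_sq (by linarith)

set_option maxHeartbeats 1600000 in
lemma caseB_main {q : ℝ} (hq : 0 < q) (hB9 : 9 < 2 * Real.sqrt 3 * q) :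
    Real.sqrt 2 - 1 < Htilde q ∧ q ≠ 1 / Real.sqrt 2 := by
  have hr : Real.sqrt 2 ^ 2 = 2 := Real.sq_sqrt (by norm_num)
  have hr3 : Real.sqrt 3 ^ 2 = 3 := Real.sq_sqrt (by norm_num)
  have hr0 : 0 ≤ Real.sqrt 2 := Real.sqrt_nonneg 2
  have hr30 : 0 ≤ Real.sqrt 3 := Real.sqrt_nonneg 3
  have h3gt : 1 < Real.sqrt 3 := by nlinarith
  have hrgt : 1 < Real.sqrt 2 := by nlinarith
  have hup0 : (0:ℝ) ≤ Real.sqrt 3 / 3 := by positivity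
  have hcont : ContinuousOn (fun x : ℝ => x - x ^ 3) (Icc 0 (Real.sqrt 3 / 3)) :=
    (continuous_id.sub (continuous_pow 3)).continuousOn
  have hmem : 1 / q ∈ Icc ((fun x : ℝ => x - x ^ 3) 0) ((fun x : ℝ => x - x ^ 3) (Real.sqrt 3 / 3)) := by
    constructor
    · show (0:ℝ) - 0 ^ 3 ≤ 1 / q
      simp
      positivity
    · show 1 / q ≤ Real.sqrt 3 / 3 - (Real.sqrt 3 / 3) ^ 3
      have h1 : Real.sqrt 3 / 3 - (Real.sqrt 3 / 3) ^ 3 = 2 * Real.sqrt 3 / 9 := by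
        have h2 : (Real.sqrt 3 / 3) ^ 3 = (Real.sqrt 3 / 3) ^ 2 * (Real.sqrt 3 / 3) := by ring
        rw [h2, div_pow, hr3]; ring
      rw [h1, div_le_div_iff₀ hq (by norm_num)]
      linarith
  obtain ⟨s, hsmem, hfs⟩ := intermediate_value_Icc hup0 hcont hmem
  simp only at hfs
  have hpos : 0 < s - s ^ 3 := by rw [hfs]; positivity
  have hs0 : 0 < s := by
    by_contra hns
    push_neg at hns
    have hseq : s = 0 := le_antisymm hns hsmem.1
    rw [hseq] at hpos
    norm_num at hpos
  have hs1 : Real.sqrt 3 * s ≤ 1 := by nlinarith [hsmem.2]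
  have hroot : q * (s - s ^ 3) = 1 := by rw [hfs]; field_simp
  constructor
  · rw [htilde_B hq hs0 hs1 hroot]
    exact caseB_ineq hq hs0 hs1 hroot
  · intro hq2
    rw [hq2] at hB9
    have h1 : (1 / Real.sqrt 2) * Real.sqrt 2 = 1 := by field_simp
    have h2 : 9 * Real.sqrt 2 < 2 * Real.sqrt 3 := by nlinarith [hB9, hrgt]
    nlinarith [h2, hr, hr3, hr0, hr30]

theorem Htilde_min :
    (∀ q : ℝ, 0 < q → Real.sqrt 2 - 1 ≤ Htilde q) ∧
    (∀ q : ℝ, 0 < q → (Htilde q = Real.sqrt 2 - 1 ↔ q = 1 / Real.sqrt 2)) := by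
  constructor
  · intro q hq
    rcases le_or_gt (2 * Real.sqrt 3 * q) 9 with h | h
    · exact (caseA_main hq h).1
    · exact (caseB_main hq h).1.le
  · intro q hq
    rcases le_or_gt (2 * Real.sqrt 3 * q) 9 with h | h
    · exact (caseA_main hq h).2
    · constructor
      · intro heq
        exact absurd heq (caseB_main hq h).1.ne'
      · intro h2
        exact absurd h2 (caseB_main hq h).2
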